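/- Let K be a compact Hausdorff space and let ⋆ : C(K,ℝ) × C(K,ℝ) → C(K,ℝ) be a bilinear, associative operation such that ‖f ⋆ g‖∞ ≤ ‖f‖∞·‖g‖∞ for all f, g, such that f ≥ 0 and g ≥ 0 imply f ⋆ g ≥ 0, and such that the constant function 1 is a two-sided identity for ⋆. Then ⋆ is the pointwise multiplication: f ⋆ g = f·g for all f, g ∈ C(K,ℝ). -/
import Mathlib


open ContinuousMap

/-- Martignon. Let `K` be a compact Hausdorff space and let `⋆` be a
bilinear, associative, submultiplicative and positive product on `C(K, ℝ)` for which the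
constant function `1` is a two-sided identity. Then `⋆` is the pointwise product. -/
theorem continuousMap_product_with_one_is_pointwise
    {K : Type*} [TopologicalSpace K] [CompactSpace K] [T2Space K]
    (star : C(K, ℝ) →ₗ[ℝ] C(K, ℝ) →ₗ[ℝ] C(K, ℝ))
    (star_assoc : ∀ f g h : C(K, ℝ), star (star f g) h = star f (star g h))
    (norm_star_le : ∀ f g : C(K, ℝ), ‖star f g‖ ≤ ‖f‖ * ‖g‖)
    (star_nonneg : ∀ f g : C(K, ℝ), 0 ≤ f → 0 ≤ g → 0 ≤ star f g)
    (one_star : ∀ f : C(K, ℝ), star 1 f = f)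
    (star_one : ∀ f : C(K, ℝ), star f 1 = f) :
    ∀ f g : C(K, ℝ), star f g = f * g := by
  -- Key step: for `0 ≤ g ≤ 1` and every point `x`, `(f ⋆ g)(x) = f(x) g(x)`.
  have key : ∀ (x : K) (g : C(K, ℝ)), 0 ≤ g → g ≤ 1 → ∀ f : C(K, ℝ),
      (star f g) x = f x * g x := by
    intro x g hg0 hg1 f
    -- positive functions vanishing at x are killed
    have pos : ∀ h : C(K, ℝ), 0 ≤ h → h x = 0 → (star h g) x = 0 := by
      intro h hh hx
      have h1 : (0:ℝ) ≤ (star h g) x := (star_nonneg h g hh hg0) x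
      have h2 : (0:ℝ) ≤ (star h (1 - g)) x :=
        (star_nonneg h (1 - g) hh (by simpa using sub_nonneg.mpr hg1)) x
      have hsum : star h g + star h (1 - g) = h := by
        rw [← map_add]
        simpa using star_one h
      have h3 : (star h g) x + (star h (1 - g)) x = h x := by
        have := congrArg (fun u : C(K, ℝ) => u x) hsum
        simpa using this
      linarith
    -- all functions vanishing at x are killed
    have zero : ∀ h : C(K, ℝ), h x = 0 → (star h g) x = 0 := by
      intro h hx
      have hdec : h = (h ⊔ 0) - ((-h) ⊔ 0) := by
        ext y
        simp only [ContinuousMap.sub_apply, ContinuousMap.sup_apply,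
          ContinuousMap.neg_apply, ContinuousMap.zero_apply]
        rcases le_total (h y) 0 with hy | hy
        · rw [sup_eq_right.mpr hy, sup_eq_left.mpr (by linarith)]; ring
        · rw [sup_eq_left.mpr hy, sup_eq_right.mpr (by linarith)]; ring
      have hp0 : (0 : C(K, ℝ)) ≤ h ⊔ 0 := le_sup_right
      have hn0 : (0 : C(K, ℝ)) ≤ (-h) ⊔ 0 := le_sup_right
      have hpx : (h ⊔ 0) x = 0 := by
        simp [ContinuousMap.sup_apply, hx]
      have hnx : ((-h) ⊔ 0) x = 0 := by
        simp [ContinuousMap.sup_apply, hx]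
      have : star h g = star (h ⊔ 0) g - star ((-h) ⊔ 0) g := by
        nth_rewrite 1 [hdec]
        simp [map_sub]
      rw [this]
      have e1 := pos (h ⊔ 0) hp0 hpx
      have e2 := pos ((-h) ⊔ 0) hn0 hnx
      simp only [ContinuousMap.sub_apply]
      rw [e1, e2]; ring
    -- decompose f as (f - f(x)•1) + f(x)•1
    have hz : (f - f x • 1 : C(K, ℝ)) x = 0 := by
      simp
    have := zero (f - f x • 1) hz
    have hsplit : star f g = star (f - f x • 1) g + f x • star 1 g := by
      rw [map_sub, map_smul]
      simp
    rw [hsplit]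
    have h1g : (star 1 g) x = g x := by rw [one_star g]
    simp only [ContinuousMap.add_apply, ContinuousMap.smul_apply]
    rw [this, h1g, smul_eq_mul]; ring
  -- now the general case by an affine rescaling of g
  intro f g
  ext x
  set c : ℝ := ‖g‖ + 1 with hc
  have hcpos : (0:ℝ) < c := by positivity
  have h2c : (0:ℝ) < 2 * c := by positivity
  set g' : C(K, ℝ) := (2 * c)⁻¹ • (g + c • 1) with hg'
  have hb : ∀ y : K, |g y| ≤ ‖g‖ := fun y => g.norm_coe_le_norm y
  have hg'0 : (0 : C(K, ℝ)) ≤ g' := by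
    rw [ContinuousMap.le_def]
    intro y
    have hy := abs_le.mp (hb y)
    simp only [hg', ContinuousMap.smul_apply, ContinuousMap.add_apply,
      ContinuousMap.one_apply, ContinuousMap.zero_apply, smul_eq_mul]
    have hnn : 0 ≤ g y + c * 1 := by simp only [hc]; linarith [hy.1]
    positivity
  have hg'1 : g' ≤ 1 := by
    rw [ContinuousMap.le_def]
    intro y
    have hy := abs_le.mp (hb y)
    simp only [hg', ContinuousMap.smul_apply, ContinuousMap.add_apply,
      ContinuousMap.one_apply, smul_eq_mul]
    rw [inv_mul_le_iff₀ h2c]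
    simp only [hc]; linarith [hy.2]
  have hrec : g = (2 * c) • g' - c • 1 := by
    rw [hg', smul_smul, mul_inv_cancel₀ (ne_of_gt h2c), one_smul]
    abel
  have : star f g = (2 * c) • star f g' - c • star f 1 := by
    nth_rewrite 1 [hrec]
    simp only [map_sub, map_smul]
  rw [this]
  simp only [ContinuousMap.sub_apply, ContinuousMap.smul_apply, smul_eq_mul,
    star_one f, ContinuousMap.mul_apply]
  rw [key x g' hg'0 hg'1 f]
  have hgx : g x = (2 * c) * g' x - c := by
    have := congrArg (fun u : C(K, ℝ) => u x) hrec
    simpa using this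
  rw [hgx]; ring
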